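/- Let M be a compact smooth manifold. Then every unital ℂ-algebra homomorphism η : C^∞(M,ℂ) → ℂ is evaluation at a point: there exists a unique x ∈ M such that η(f) = f(x) for all f ∈ C^∞(M,ℂ). -/

import Mathlib

open Bundle Manifold
open scoped TensorProduct

local notation "∞" => (⊤ : ℕ∞)

noncomputable section

/-- Complex multiplication and addition are smooth over `ℝ`, so that the complex-valued smooth
functions on a real manifold form a (comm)ring. -/
instance : ContMDiffRing 𝓘(ℝ, ℂ) (⊤ : ℕ∞) ℂ where
  contMDiff_add := by
    rw [contMDiff_iff]
    refine ⟨continuous_add, fun x y => ?_⟩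
    simp only [mfld_simps]
    exact (contDiff_add).contDiffOn
  contMDiff_mul := by
    rw [contMDiff_iff]
    refine ⟨continuous_mul, fun x y => ?_⟩
    simp only [mfld_simps]
    exact (contDiff_mul).contDiffOn

variable {EM : Type*} [NormedAddCommGroup EM] [NormedSpace ℝ EM] [FiniteDimensional ℝ EM]
  {HM : Type*} [TopologicalSpace HM] {IM : ModelWithCorners ℝ EM HM}
  {M : Type*} [TopologicalSpace M] [ChartedSpace HM M] [IsManifold IM (⊤ : ℕ∞) M]
  [T2Space M] [SecondCountableTopology M] [CompactSpace M]

/-- The constant functions make the smooth complex-valued functions a `ℂ`-algebra. -/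
instance : Algebra ℂ C^∞⟮IM, M; 𝓘(ℝ, ℂ), ℂ⟯ :=
  RingHom.toAlgebra
    { toFun := fun c => ⟨fun _ => c, contMDiff_const⟩
      map_one' := rfl
      map_mul' := fun _ _ => rfl
      map_zero' := rfl
      map_add' := fun _ _ => rfl }

/-- Every unital `ℂ`-algebra homomorphism from the smooth complex-valued functions on a compact
manifold to `ℂ` is evaluation at a unique point. -/
theorem algHom_eq_eval (η : C^∞⟮IM, M; 𝓘(ℝ, ℂ), ℂ⟯ →ₐ[ℂ] ℂ) :
    ∃! x : M, ∀ f : C^∞⟮IM, M; 𝓘(ℝ, ℂ), ℂ⟯, η f = f x := by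
  have key : ∃ x : M, ∀ f : C^∞⟮IM, M; 𝓘(ℝ, ℂ), ℂ⟯, η f = f x := by
    by_contra hc
    push_neg at hc
    choose F hF using hc
    -- for each x, a function in the kernel of η not vanishing at x
    set g : M → C^∞⟮IM, M; 𝓘(ℝ, ℂ), ℂ⟯ :=
      fun x => F x - algebraMap ℂ _ (η (F x)) with hg
    have hηg : ∀ x, η (g x) = 0 := by
      intro x
      simp [hg, AlgHom.commutes]
    have hgx : ∀ x : M, (g x) x ≠ 0 := by
      intro x h
      apply hF x
      have : (F x) x - η (F x) = 0 := h
      have := sub_eq_zero.mp this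
      exact this.symm
    -- finite subcover
    have hopen : ∀ x : M, IsOpen {y : M | (g x) y ≠ 0} := by
      intro x
      exact isOpen_ne.preimage (g x).contMDiff.continuous
    obtain ⟨t, ht⟩ := isCompact_univ.elim_finite_subcover
      (fun x : M => {y : M | (g x) y ≠ 0}) hopen
      (fun y _ => Set.mem_iUnion.2 ⟨y, hgx y⟩)
    -- conjugation as an operation on smooth maps
    have conj_smooth : ContDiff ℝ ((⊤ : ℕ∞) : WithTop ℕ∞) (starRingEnd ℂ) := Complex.conjCLE.contDiff
    set cj : C^∞⟮IM, M; 𝓘(ℝ, ℂ), ℂ⟯ → C^∞⟮IM, M; 𝓘(ℝ, ℂ), ℂ⟯ :=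
      fun f => ⟨fun y => starRingEnd ℂ (f y), conj_smooth.comp_contMDiff f.contMDiff⟩ with hcj
    set h : C^∞⟮IM, M; 𝓘(ℝ, ℂ), ℂ⟯ := ∑ x ∈ t, g x * cj (g x) with hh
    have hhy : ∀ y : M, h y = ((∑ x ∈ t, Complex.normSq ((g x) y) : ℝ) : ℂ) := by
      intro y
      let ev : C^∞⟮IM, M; 𝓘(ℝ, ℂ), ℂ⟯ →+* ℂ :=
        { toFun := fun f => f y
          map_one' := rfl
          map_mul' := fun _ _ => rfl
          map_zero' := rfl
          map_add' := fun _ _ => rfl }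
      have : h y = ev h := rfl
      rw [this, hh, map_sum]
      push_cast
      refine Finset.sum_congr rfl fun x _ => ?_
      have : ev (g x * cj (g x)) = (g x) y * starRingEnd ℂ ((g x) y) := rfl
      rw [this, Complex.mul_conj]
    have hne : ∀ y : M, h y ≠ 0 := by
      intro y
      rw [hhy y]
      have hy := ht (Set.mem_univ y)
      simp only [Set.mem_iUnion] at hy
      obtain ⟨x, hxt, hxy⟩ := hy
      have hpos : 0 < ∑ x ∈ t, Complex.normSq ((g x) y) :=
        Finset.sum_pos' (fun x _ => Complex.normSq_nonneg _)
          ⟨x, hxt, Complex.normSq_pos.2 hxy⟩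
      exact_mod_cast hpos.ne'
    -- the inverse of h is smooth
    have hinv_smooth : ContMDiff IM 𝓘(ℝ, ℂ) ((⊤ : ℕ∞) : WithTop ℕ∞) (fun y => (h y)⁻¹) := by
      intro y
      exact ((contDiffAt_inv ℝ (hne y)).comp_contMDiffAt (h.contMDiff y))
    set hinv : C^∞⟮IM, M; 𝓘(ℝ, ℂ), ℂ⟯ := ⟨fun y => (h y)⁻¹, hinv_smooth⟩ with hhinv
    have hmul : h * hinv = 1 := by
      ext y
      have : (h * hinv) y = h y * (h y)⁻¹ := rfl
      rw [this, mul_inv_cancel₀ (hne y)]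
      rfl
    have hη1 : η h * η hinv = 1 := by rw [← map_mul, hmul, map_one]
    have hη0 : η h = 0 := by
      rw [hh, map_sum]
      refine Finset.sum_eq_zero fun x _ => ?_
      rw [map_mul, hηg x, zero_mul]
    rw [hη0, zero_mul] at hη1
    exact zero_ne_one hη1
  obtain ⟨x, hx⟩ := key
  refine ⟨x, hx, fun y hy => ?_⟩
  by_contra hxy
  obtain ⟨f, hf0, hf1, -⟩ := exists_contMDiffMap_zero_one_of_isClosed (n := ⊤) IM
    (isClosed_singleton (x := y)) (isClosed_singleton (x := x))
    (Set.disjoint_singleton.2 hxy)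
  have ofReal_smooth : ContDiff ℝ ((⊤ : ℕ∞) : WithTop ℕ∞) (Complex.ofRealCLM : ℝ → ℂ) := Complex.ofRealCLM.contDiff
  set F : C^∞⟮IM, M; 𝓘(ℝ, ℂ), ℂ⟯ :=
    ⟨fun z => ((f z : ℝ) : ℂ), ofReal_smooth.comp_contMDiff f.contMDiff⟩ with hFdef
  have h1 : η F = F x := hx F
  have h2 : η F = F y := hy F
  have hFx : F x = 1 := by
    have := hf1 (Set.mem_singleton x)
    show ((f x : ℝ) : ℂ) = 1
    rw [show f x = 1 from this]
    norm_num
  have hFy : F y = 0 := by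
    have := hf0 (Set.mem_singleton y)
    show ((f y : ℝ) : ℂ) = 0
    rw [show f y = 0 from this]
    norm_num
  rw [h1, hFx] at h2
  rw [hFy] at h2
  exact one_ne_zero h2

end
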